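/- Kantorovich inequality for positive linear maps: if Φ is a positive unital linear map and A is positive with m·I ≤ A ≤ M·I for 0 < m ≤ M, then Φ(A⁻¹) ≤ ((m+M)²/(4mM)) · Φ(A)⁻¹. -/

import Mathlib

set_option maxHeartbeats 1000000
set_option synthInstance.maxHeartbeats 400000


/-- Kantorovich inequality for positive unital linear maps: if `Φ` is positive and unital
and `m • 1 ≤ A ≤ M • 1` with `0 < m ≤ M`, then
`Φ(A⁻¹) ≤ ((m+M)²/(4mM)) • Φ(A)⁻¹`. -/
theorem kantorovich_positive_linear_map
    {H K : Type*} [NormedAddCommGroup H] [InnerProductSpace ℂ H] [CompleteSpace H]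
    [NormedAddCommGroup K] [InnerProductSpace ℂ K] [CompleteSpace K]
    (Φ : (H →L[ℂ] H) →ₗ[ℂ] (K →L[ℂ] K))
    (hΦ1 : Φ 1 = 1) (hΦpos : ∀ a : H →L[ℂ] H, 0 ≤ a → 0 ≤ Φ a)
    (A : H →L[ℂ] H) (hA : 0 ≤ A) (hinv : Invertible A)
    (m M : ℝ) (hm : 0 < m) (hmM : m ≤ M)
    (h1 : m • (1 : H →L[ℂ] H) ≤ A) (h2 : A ≤ M • (1 : H →L[ℂ] H)) :
    Φ hinv.invOf ≤ ((m + M) ^ 2 / (4 * m * M)) • Ring.inverse (Φ A) := by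
  have hM : 0 < M := hm.trans_le hmM
  set c : ℝ := (m + M) ^ 2 / (4 * m * M) with hc
  have hΦmono : ∀ a b : H →L[ℂ] H, a ≤ b → Φ a ≤ Φ b := fun a b hab => by
    have h := hΦpos (b - a) (sub_nonneg.2 hab)
    rw [map_sub] at h
    exact sub_nonneg.1 h
  have hAsa : IsSelfAdjoint A := .of_nonneg hA
  have hsm : ∀ (r : ℝ), r • (1 : H →L[ℂ] H) = algebraMap ℝ _ r := fun r =>
    (Algebra.algebraMap_eq_smul_one r).symm
  have hsmK : ∀ (r : ℝ), r • (1 : K →L[ℂ] K) = algebraMap ℝ _ r := fun r =>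
    (Algebra.algebraMap_eq_smul_one r).symm
  have hspecA : ∀ x ∈ spectrum ℝ A, m ≤ x ∧ x ≤ M := fun x hx =>
    ⟨algebraMap_le_iff_le_spectrum (a := A) hAsa |>.mp (hsm m ▸ h1) x hx,
     le_algebraMap_iff_spectrum_le (a := A) hAsa |>.mp (hsm M ▸ h2) x hx⟩
  have hA0 : ∀ x ∈ spectrum ℝ A, x ≠ 0 := fun x hx => (hm.trans_le (hspecA x hx).1).ne'
  have hcontA : ContinuousOn (fun x : ℝ => x⁻¹) (spectrum ℝ A) :=
    ContinuousOn.inv₀ continuousOn_id hA0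
  have hinvOf : hinv.invOf = cfc (fun x : ℝ => x⁻¹) A := by
    have := cfc_inv_id (R := ℝ) (unitOfInvertible A) hAsa
    exact this.symm
  -- key1 : A + (m*M) • ⅟A ≤ (m+M) • 1
  have key1 : A + (m * M) • hinv.invOf ≤ (m + M) • (1 : H →L[ℂ] H) := by
    rw [hinvOf, hsm]
    have e1 : (m * M) • cfc (fun x : ℝ => x⁻¹) A = cfc (fun x : ℝ => (m * M) • x⁻¹) A :=
      (cfc_smul (m * M) (fun x : ℝ => x⁻¹) A hcontA).symm
    rw [e1]
    nth_rw 1 [← cfc_id ℝ A hAsa]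
    rw [← cfc_add A id (fun x : ℝ => (m * M) • x⁻¹) continuousOn_id
      (hcontA.const_smul (m * M))]
    apply cfc_le_algebraMap _ _ _ (fun x hx => ?_)
      ((continuousOn_id.add (hcontA.const_smul (m * M)))) hAsa
    obtain ⟨hxm, hxM⟩ := hspecA x hx
    have hx0 : 0 < x := hm.trans_le hxm
    simp only [Pi.add_apply, Pi.smul_apply, id_eq, smul_eq_mul]
    rw [← sub_nonneg]
    have he : m + M - (x + m * M * x⁻¹) = (x - m) * (M - x) / x := by field_simp; ring
    rw [he]
    exact div_nonneg (mul_nonneg (by linarith) (by linarith)) hx0.le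
  have key2 : Φ A + (m * M) • Φ hinv.invOf ≤ (m + M) • (1 : K →L[ℂ] K) := by
    have h := hΦmono _ _ key1
    rwa [map_add, LinearMap.map_smul_of_tower, LinearMap.map_smul_of_tower, hΦ1] at h
  set B := Φ A with hB
  have hBm : m • (1 : K →L[ℂ] K) ≤ B := by
    have h := hΦmono _ _ h1
    rwa [LinearMap.map_smul_of_tower, hΦ1] at h
  have hBM : B ≤ M • (1 : K →L[ℂ] K) := by
    have h := hΦmono _ _ h2
    rwa [LinearMap.map_smul_of_tower, hΦ1] at h
  have hB0 : (0 : K →L[ℂ] K) ≤ B := hΦpos A hA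
  have hBsa : IsSelfAdjoint B := .of_nonneg hB0
  have hspecB : ∀ x ∈ spectrum ℝ B, m ≤ x ∧ x ≤ M := fun x hx =>
    ⟨algebraMap_le_iff_le_spectrum (a := B) hBsa |>.mp (hsmK m ▸ hBm) x hx,
     le_algebraMap_iff_spectrum_le (a := B) hBsa |>.mp (hsmK M ▸ hBM) x hx⟩
  have hB0' : ∀ x ∈ spectrum ℝ B, x ≠ 0 := fun x hx => (hm.trans_le (hspecB x hx).1).ne'
  have hcontB : ContinuousOn (fun x : ℝ => x⁻¹) (spectrum ℝ B) :=
    ContinuousOn.inv₀ continuousOn_id hB0'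
  have hRinv : Ring.inverse B = cfc (fun x : ℝ => x⁻¹) B := by
    have h := cfc_inv (R := ℝ) id B (fun x hx => hB0' x hx) continuousOn_id hBsa
    rw [cfc_id ℝ B hBsa] at h
    simp only [id_eq] at h
    exact h.symm
  have key3 : cfc (fun x : ℝ => (m * M)⁻¹ • ((m + M) - x)) B ≤ c • Ring.inverse B := by
    rw [hRinv, ← cfc_smul c (fun x : ℝ => x⁻¹) B hcontB]
    refine cfc_mono (fun x hx => ?_) (by fun_prop) (hcontB.const_smul c)
    obtain ⟨hxm, hxM⟩ := hspecB x hx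
    have hx0 : 0 < x := hm.trans_le hxm
    rw [← sub_nonneg, smul_eq_mul]
    have he : c * x⁻¹ - (m * M)⁻¹ • ((m + M) - x) = (m + M - 2 * x) ^ 2 / (4 * m * M * x) := by
      rw [hc, smul_eq_mul]; field_simp; ring
    rw [he]
    positivity
  have key4 : Φ hinv.invOf ≤ cfc (fun x : ℝ => (m * M)⁻¹ • ((m + M) - x)) B := by
    have e : cfc (fun x : ℝ => (m * M)⁻¹ • ((m + M) - x)) B
        = (m * M)⁻¹ • ((m + M) • (1 : K →L[ℂ] K) - B) := by
      have e1 : cfc (fun x : ℝ => (m * M)⁻¹ • ((m + M) - x)) B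
          = (m * M)⁻¹ • cfc (fun x : ℝ => (m + M) - x) B :=
        cfc_smul (m * M)⁻¹ (fun x : ℝ => (m + M) - x) B (by fun_prop)
      have e2 : cfc (fun x : ℝ => (m + M) - x) B
          = cfc (fun _ : ℝ => (m + M)) B - cfc (id : ℝ → ℝ) B :=
        cfc_sub (fun _ : ℝ => (m + M)) id B (by fun_prop) (by fun_prop)
      rw [e1, e2, cfc_id ℝ B hBsa, cfc_const (m + M) B hBsa, ← hsmK]
    rw [e]
    have h5 : (m * M) • Φ hinv.invOf ≤ (m + M) • (1 : K →L[ℂ] K) - B :=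
      le_sub_iff_add_le'.mpr key2
    calc Φ hinv.invOf = (m * M)⁻¹ • ((m * M) • Φ hinv.invOf) := by
          rw [smul_smul, inv_mul_cancel₀ (by positivity), one_smul]
      _ ≤ (m * M)⁻¹ • ((m + M) • (1 : K →L[ℂ] K) - B) :=
          smul_le_smul_of_nonneg_left h5 (by positivity)
  exact key4.trans key3
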